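/- For an ideal I of a commutative ring R with identity, I is locally principal (i.e., I·R_M is a principal ideal of R_M for every maximal ideal M of R) if and only if its extension I·R[X]_A is a locally principal ideal of the Anderson ring R[X]_A. -/

import Mathlib

open Polynomial

section Aux

variable {R : Type*} {S : Type*} [CommRing R] [CommRing S]

lemma aux_map_principal (f : R →+* S) {I : Ideal R} (h : I.IsPrincipal) :
    (I.map f).IsPrincipal := by
  obtain ⟨g, hg⟩ := h
  refine ⟨f g, ?_⟩
  rw [Ideal.submodule_span_eq, hg, Ideal.submodule_span_eq, Ideal.map_span, Set.image_singleton]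

lemma aux_mem_of_mul_unit {K : Ideal S} {x u : S} (hu : IsUnit u) (h : x * u ∈ K) : x ∈ K := by
  obtain ⟨v, rfl⟩ := hu
  have := K.mul_mem_right (↑v⁻¹) h
  rwa [mul_assoc, Units.mul_inv, mul_one] at this


lemma aux_map_principal_comp {T : Type*} [CommRing T] (f : R →+* S) (g : S →+* T) {I : Ideal R}
    (h : (Ideal.map f I).IsPrincipal) : (Ideal.map (g.comp f) I).IsPrincipal := by
  rw [← Ideal.map_map]
  exact aux_map_principal g h

/-- The key descent lemma: if `Q` is a prime of `R[X]` containing `M·R[X]` and the extension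
of `I` to the localization of `R[X]` at `Q` is principal, then `I·R_M` is principal. -/
theorem aux_descent (I M : Ideal R) (hM : M.IsMaximal)
    (Q : Ideal (Polynomial R)) (hQ : Q.IsPrime)
    (hMQ : Ideal.map (Polynomial.C) M ≤ Q)
    (L : Type*) [CommRing L] [Algebra (Polynomial R) L] [IsLocalization.AtPrime L Q]
    (hp : (Ideal.map (algebraMap (Polynomial R) L) (Ideal.map Polynomial.C I)).IsPrincipal) :
    letI := hM.isPrime
    (Ideal.map (algebraMap R (Localization.AtPrime M)) I).IsPrincipal := by
  letI := hM.isPrime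
  classical
  set ψ := algebraMap (Polynomial R) L with hψ
  set σ := algebraMap R (Localization.AtPrime M) with hσ
  -- get a single polynomial generator f with coefficients in I
  obtain ⟨g, hg⟩ := hp
  have hgmem : g ∈ Ideal.map ψ (Ideal.map Polynomial.C I) := by
    rw [hg, Ideal.submodule_span_eq]; exact Ideal.subset_span rfl
  rw [IsLocalization.mem_map_algebraMap_iff Q.primeCompl L] at hgmem
  obtain ⟨⟨f0, s⟩, hfs⟩ := hgmem
  set f : Polynomial R := (f0 : Polynomial R) with hf
  have hfI : ∀ n, f.coeff n ∈ I := Ideal.mem_map_C_iff.mp f0.2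
  have hspan : Ideal.map ψ (Ideal.map Polynomial.C I) = Ideal.span {ψ f} := by
    rw [hg, Ideal.submodule_span_eq, ← hfs,
      Ideal.span_singleton_mul_right_unit (IsLocalization.map_units L s) g]
  -- the basic relation
  have R1 : ∀ a ∈ I, ∃ w h' : Polynomial R, w ∈ Q.primeCompl ∧
      Polynomial.C a * w = f * h' := by
    intro a ha
    have h1 : ψ (Polynomial.C a) ∈ Ideal.span {ψ f} := by
      rw [← hspan]; exact Ideal.mem_map_of_mem ψ (Ideal.mem_map_of_mem _ ha)
    rw [Ideal.mem_span_singleton] at h1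
    obtain ⟨z, hz⟩ := h1
    obtain ⟨⟨h0, w0⟩, hw0⟩ := IsLocalization.surj Q.primeCompl z
    have heq : ψ (Polynomial.C a * (w0 : Polynomial R)) = ψ (f * h0) := by
      rw [map_mul, map_mul, hz, mul_assoc, hw0]
    obtain ⟨c, hc⟩ := (IsLocalization.eq_iff_exists Q.primeCompl L).mp heq
    exact ⟨(w0 : Polynomial R) * (c : Polynomial R), h0 * (c : Polynomial R),
      Submonoid.mul_mem _ w0.2 c.2, by linear_combination hc⟩
  -- some coefficient of an element outside Q is outside M
  have hnM : ∀ w : Polynomial R, w ∈ Q.primeCompl → ∃ n, w.coeff n ∉ M := by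
    intro w hw
    by_contra hcon
    push_neg at hcon
    exact hw (hMQ (Ideal.mem_map_C_iff.mpr hcon))
  -- J is contained in the extension of the content ideal of f
  set Cf : Ideal R := Ideal.span (Set.range f.coeff) with hCf
  set J : Ideal (Localization.AtPrime M) := Ideal.map σ I with hJ
  have hfCf : f ∈ Ideal.map (Polynomial.C : R →+* Polynomial R) Cf :=
    Ideal.mem_map_C_iff.mpr fun n => Ideal.subset_span ⟨n, rfl⟩
  have hJle : J ≤ Ideal.map σ Cf := by
    rw [hJ, Ideal.map_le_iff_le_comap]
    intro a ha
    obtain ⟨w, h', hw, e⟩ := R1 a ha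
    obtain ⟨n0, hn0⟩ := hnM w hw
    have hmem : a * w.coeff n0 ∈ Cf := by
      have h2 : (f * h') ∈ Ideal.map (Polynomial.C : R →+* Polynomial R) Cf :=
        Ideal.mul_mem_right _ _ hfCf
      have h3 := Ideal.mem_map_C_iff.mp h2 n0
      rwa [← e, Polynomial.coeff_C_mul] at h3
    have hu : IsUnit (σ (w.coeff n0)) :=
      IsLocalization.map_units (Localization.AtPrime M) (⟨w.coeff n0, hn0⟩ : M.primeCompl)
    refine Ideal.mem_comap.mpr (aux_mem_of_mul_unit hu ?_)
    rw [← map_mul]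
    exact Ideal.mem_map_of_mem σ hmem
  have hJeq : J = Ideal.map σ Cf := by
    refine le_antisymm hJle (Ideal.map_mono (Ideal.span_le.mpr ?_))
    rintro _ ⟨n, rfl⟩
    exact hfI n
  have hJfg : J.FG := by
    rw [hJeq]
    refine Ideal.FG.map (Submodule.fg_span ?_) σ
    refine Set.Finite.subset ((f.support.image f.coeff).finite_toSet.insert (0 : R)) ?_
    rintro _ ⟨n, rfl⟩
    by_cases h : n ∈ f.support
    · exact Set.mem_insert_of_mem _ (Finset.mem_coe.mpr (Finset.mem_image_of_mem _ h))
    · simp [Polynomial.notMem_support_iff.mp h]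
  -- the dichotomy
  set K : Ideal (Localization.AtPrime M) := Ideal.map σ (M * I) with hK
  have dich : ∀ a ∈ I, ∀ b ∈ I, σ a ∈ Ideal.span {σ b} ∨ σ b ∈ K := by
    intro a ha b hb
    obtain ⟨w₁, h₁, hw₁, e₁⟩ := R1 a ha
    obtain ⟨w₂, h₂, hw₂, e₂⟩ := R1 b hb
    have key : ∀ n, a * (w₁ * h₂).coeff n = b * (w₂ * h₁).coeff n := by
      intro n
      have e3 : Polynomial.C a * (w₁ * h₂) = Polynomial.C b * (w₂ * h₁) := by
        linear_combination h₂ * e₁ - h₁ * e₂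
      have := congrArg (fun p => Polynomial.coeff p n) e3
      simpa [Polynomial.coeff_C_mul] using this
    by_cases hp1 : ∀ n, (w₁ * h₂).coeff n ∈ M
    · right
      have hMprime : (Ideal.map (Polynomial.C : R →+* Polynomial R) M).IsPrime :=
        Ideal.isPrime_map_C_of_isPrime (P := M)
      have hmulM : w₁ * h₂ ∈ Ideal.map (Polynomial.C : R →+* Polynomial R) M :=
        Ideal.mem_map_C_iff.mpr hp1
      have hh₂ : h₂ ∈ Ideal.map (Polynomial.C : R →+* Polynomial R) M := by
        rcases hMprime.mem_or_mem hmulM with h | h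
        · exact absurd (hMQ h) hw₁
        · exact h
      have hfh₂ : ∀ n, (f * h₂).coeff n ∈ M * I := by
        intro n
        refine Ideal.mem_map_C_iff.mp ?_ n
        rw [mul_comm M I, Ideal.map_mul]
        exact Ideal.mul_mem_mul (Ideal.mem_map_C_iff.mpr hfI) hh₂
      obtain ⟨n0, hn0⟩ := hnM w₂ hw₂
      have hmem : b * w₂.coeff n0 ∈ M * I := by
        have := hfh₂ n0
        rwa [← e₂, Polynomial.coeff_C_mul] at this
      have hu : IsUnit (σ (w₂.coeff n0)) :=
        IsLocalization.map_units (Localization.AtPrime M) (⟨w₂.coeff n0, hn0⟩ : M.primeCompl)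
      refine aux_mem_of_mul_unit hu ?_
      rw [← map_mul]
      exact Ideal.mem_map_of_mem σ hmem
    · left
      push_neg at hp1
      obtain ⟨n0, hn0⟩ := hp1
      obtain ⟨u, hu⟩ := IsLocalization.map_units (Localization.AtPrime M)
        (⟨(w₁ * h₂).coeff n0, hn0⟩ : M.primeCompl)
      have hkey : σ a * (u : Localization.AtPrime M) = σ b * σ ((w₂ * h₁).coeff n0) := by
        rw [hu]
        dsimp only
        rw [← map_mul, ← map_mul, key n0]
      rw [Ideal.mem_span_singleton]
      refine ⟨σ ((w₂ * h₁).coeff n0) * (↑u⁻¹ : Localization.AtPrime M), ?_⟩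
      calc σ a = σ a * ↑u * ↑u⁻¹ := by rw [mul_assoc, Units.mul_inv, mul_one]
        _ = σ b * (σ ((w₂ * h₁).coeff n0) * ↑u⁻¹) := by rw [hkey, mul_assoc]
  -- conclude
  by_cases hall : ∀ b ∈ I, σ b ∈ K
  · have hJbot : J = ⊥ := by
      refine Submodule.eq_bot_of_le_smul_of_le_jacobson_bot (Ideal.map σ M) J hJfg ?_ ?_
      · rw [smul_eq_mul, hJ, ← Ideal.map_mul, ← hK]
        rw [Ideal.map_le_iff_le_comap]
        exact fun b hb => Ideal.mem_comap.mpr (hall b hb)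
      · rw [Localization.AtPrime.map_eq_maximalIdeal]
        exact IsLocalRing.maximalIdeal_le_jacobson ⊥
    refine ⟨0, ?_⟩
    rw [Ideal.submodule_span_eq, hJbot]
    exact (Ideal.span_singleton_eq_bot.mpr rfl).symm
  · push_neg at hall
    obtain ⟨b, hb, hbK⟩ := hall
    refine ⟨σ b, ?_⟩
    rw [Ideal.submodule_span_eq]
    refine le_antisymm ?_ ?_
    · rw [hJ, Ideal.map_le_iff_le_comap]
      intro a ha
      exact Ideal.mem_comap.mpr ((dich a ha b hb).resolve_right hbK)
    · rw [Ideal.span_le, Set.singleton_subset_iff]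
      exact Ideal.mem_map_of_mem σ hb

end Aux

/-- The multiplicative set `A = {f ∈ R[X] : f(0) = 1}` of polynomials
with constant term `1`. -/
def andersonSubmonoid (R : Type*) [CommRing R] : Submonoid (Polynomial R) where
  carrier := {f | f.coeff 0 = 1}
  one_mem' := by simp
  mul_mem' := by
    intro a b ha hb
    simp only [Set.mem_setOf_eq, Polynomial.mul_coeff_zero] at *
    rw [ha, hb, mul_one]

/-- The Anderson ring `R[X]_A`, the localization of `R[X]` at `A`. -/
abbrev AndersonRing (R : Type*) [CommRing R] := Localization (andersonSubmonoid R)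

/-- The canonical ring homomorphism `R → R[X]_A`. -/
noncomputable def andersonMap (R : Type*) [CommRing R] : R →+* AndersonRing R :=
  (algebraMap (Polynomial R) (AndersonRing R)).comp Polynomial.C

set_option maxHeartbeats 1000000 in
/-- An ideal `I` of `R` is locally principal iff its extension `I·R[X]_A` to
the Anderson ring is locally principal. -/
theorem anderson_locally_principal_iff (R : Type*) [CommRing R] (I : Ideal R) :
    (∀ (M : Ideal R) (hM : M.IsMaximal),
      (Ideal.map (algebraMap R (@Localization.AtPrime R _ M hM.isPrime)) I).IsPrincipal) ↔
    (∀ (m : Ideal (AndersonRing R)) (hm : m.IsMaximal),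
      (Ideal.map (algebraMap (AndersonRing R) (@Localization.AtPrime (AndersonRing R) _ m hm.isPrime))
        (Ideal.map (andersonMap R) I)).IsPrincipal) := by
  constructor
  · -- easy direction
    intro H m hm
    haveI := hm.isPrime
    have hφ : ∃ φ : R →+* Localization.AtPrime m,
        φ = (algebraMap (AndersonRing R) (Localization.AtPrime m)).comp (andersonMap R) :=
      ⟨_, rfl⟩
    obtain ⟨φ, hφ⟩ := hφ
    have hpp : (Ideal.comap φ (IsLocalRing.maximalIdeal (Localization.AtPrime m))).IsPrime :=
      Ideal.comap_isPrime φ _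
    obtain ⟨M, hMmax, hpM⟩ :=
      (Ideal.comap φ (IsLocalRing.maximalIdeal (Localization.AtPrime m))).exists_le_maximal
        hpp.ne_top
    haveI := hMmax.isPrime
    obtain ⟨γ, hγ⟩ : ∃ γ : Localization.AtPrime M →+* Localization.AtPrime m,
        γ.comp (algebraMap R (Localization.AtPrime M)) = φ := by
      set p := Ideal.comap φ (IsLocalRing.maximalIdeal (Localization.AtPrime m)) with hpdef
      haveI : p.IsPrime := hpp
      refine ⟨(IsLocalization.lift (M := p.primeCompl) (g := φ) (by
          rintro ⟨y, hy⟩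
          by_contra hun
          exact hy (Ideal.mem_comap.mpr ((IsLocalRing.mem_maximalIdeal _).mpr hun)))).comp
        (IsLocalization.lift (M := M.primeCompl)
          (g := algebraMap R (Localization.AtPrime p)) (by
          rintro ⟨y, hy⟩
          exact IsLocalization.map_units _ (⟨y, fun h => hy (hpM h)⟩ : p.primeCompl))), ?_⟩
      rw [RingHom.comp_assoc, IsLocalization.lift_comp, IsLocalization.lift_comp]
    have hH : (Ideal.map (algebraMap R (Localization.AtPrime M)) I).IsPrincipal := H M hMmax
    rw [Ideal.map_map]
    rw [← hφ]
    rw [← hγ]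
    obtain ⟨x, hx⟩ := hH
    rw [← Ideal.map_map]
    rw [Ideal.submodule_span_eq] at hx
    rw [hx]
    rw [Ideal.map_span, Set.image_singleton]
    exact ⟨γ x, rfl⟩
  · -- hard direction
    intro H M hMmax
    haveI := hMmax.isPrime
    set P : Ideal (Polynomial R) := Ideal.map Polynomial.C M with hPdef
    haveI hP : P.IsPrime := Ideal.isPrime_map_C_of_isPrime (P := M)
    have hdisj : Disjoint ((andersonSubmonoid R : Submonoid (Polynomial R)) : Set (Polynomial R))
        (P : Set (Polynomial R)) := by
      rw [Set.disjoint_left]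
      intro f hf hfP
      have h0 := Ideal.mem_map_C_iff.mp hfP 0
      have h1 : f.coeff 0 = 1 := hf
      rw [h1] at h0
      exact hMmax.ne_top ((Ideal.eq_top_iff_one M).mpr h0)
    have hPT : (Ideal.map (algebraMap (Polynomial R) (AndersonRing R)) P).IsPrime :=
      IsLocalization.isPrime_of_isPrime_disjoint (andersonSubmonoid R) _ P hP hdisj
    obtain ⟨m, hmmax, hPm⟩ :=
      (Ideal.map (algebraMap (Polynomial R) (AndersonRing R)) P).exists_le_maximal hPT.ne_top
    haveI := hmmax.isPrime
    set Q : Ideal (Polynomial R) := m.comap (algebraMap (Polynomial R) (AndersonRing R)) with hQdef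
    haveI hQ : Q.IsPrime := Ideal.comap_isPrime _ m
    have hMQ : Ideal.map Polynomial.C M ≤ Q := fun x hx =>
      Ideal.mem_comap.mpr (hPm (Ideal.mem_map_of_mem _ hx))
    haveI : IsLocalization.AtPrime (Localization.AtPrime m) Q :=
      IsLocalization.isLocalization_atPrime_localization_atPrime (andersonSubmonoid R) m
    have hcomp : (algebraMap (AndersonRing R) (Localization.AtPrime m)).comp (andersonMap R) =
        (algebraMap (Polynomial R) (Localization.AtPrime m)).comp Polynomial.C := by
      rw [andersonMap, ← RingHom.comp_assoc, ← IsScalarTower.algebraMap_eq]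
    have hprin : (Ideal.map (algebraMap (Polynomial R) (Localization.AtPrime m))
        (Ideal.map Polynomial.C I)).IsPrincipal := by
      have h1 := H m hmmax
      rw [Ideal.map_map, hcomp, ← Ideal.map_map] at h1
      exact h1
    exact aux_descent I M hMmax Q hQ hMQ (Localization.AtPrime m) hprin
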